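/- Let F be a totally real number field of degree n with real embeddings τ_1,…,τ_n, and let Γ be a finite-index subgroup of the group O_F^{+,×} of totally positive units of O_F. For natural numbers k_1,…,k_n, one has ∏_{i=1}^n τ_i(u)^{k_i} = 1 for all u ∈ Γ if and only if k_1 = k_2 = ⋯ = k_n. -/

import Mathlib

open NumberField

/-- The subgroup of totally positive units of the ring of integers of `F`, with respect to a
family `τ` of real embeddings of `F`. -/
noncomputable def totPosUnits (F : Type*) [Field F] [NumberField F] {n : ℕ}
    (τ : Fin n → (F →+* ℝ)) : Subgroup (𝓞 F)ˣ where
  carrier := {u | ∀ i, 0 < τ i (algebraMap (𝓞 F) F u)}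
  one_mem' := fun i => by simp
  mul_mem' := fun {a b} ha hb i => by
    rw [Units.val_mul, map_mul, map_mul]
    exact mul_pos (ha i) (hb i)
  inv_mem' := fun {u} hu i => by
    have h1 : τ i (algebraMap (𝓞 F) F u) * τ i (algebraMap (𝓞 F) F ↑u⁻¹) = 1 := by
      rw [← map_mul, ← map_mul, Units.mul_inv, map_one, map_one]
    nlinarith [hu i]

set_option maxHeartbeats 2000000 in
open NumberField.Units NumberField.Units.dirichletUnitTheorem NumberField.InfinitePlace in
/-- Let `F` be a totally real number field of degree `n` with real
embeddings `τ_1, …, τ_n`, and `Γ` a finite-index subgroup of the totally positive units.  For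
natural numbers `k_1, …, k_n` one has `∏ i, τ_i(u)^{k_i} = 1` for all `u ∈ Γ` iff all the
`k_i` are equal. -/
theorem statement15 (F : Type*) [Field F] [NumberField F]
    (n : ℕ) (hn : n = Module.finrank ℚ F)
    (τ : Fin n → (F →+* ℝ)) (hτ : Function.Bijective τ)
    (Γ : Subgroup (𝓞 F)ˣ) (hΓ : Γ ≤ totPosUnits F τ)
    (hidx : Γ.relIndex (totPosUnits F τ) ≠ 0)
    (k : Fin n → ℕ) :
    (∀ u ∈ Γ, ∏ i, (τ i (algebraMap (𝓞 F) F u)) ^ (k i) = 1) ↔ (∀ i j, k i = k j) := by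
  classical
  -- the real embeddings, seen as complex embeddings
  set σ : Fin n → (F →+* ℂ) := fun i => (Complex.ofRealHom : ℝ →+* ℂ).comp (τ i) with hσ
  have hσreal : ∀ i, ComplexEmbedding.IsReal (σ i) := by
    intro i
    rw [ComplexEmbedding.isReal_iff]
    ext x
    simp [σ, ComplexEmbedding.conjugate_coe_eq]
  -- the induced infinite places
  set p : Fin n → InfinitePlace F := fun i => InfinitePlace.mk (σ i) with hp
  have happly : ∀ i (x : F), p i x = |τ i x| := by
    intro i x
    rw [hp, InfinitePlace.apply]
    simp [σ]
  have hpinj : Function.Injective p := by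
    intro i j hij
    rw [hp, InfinitePlace.mk_eq_iff] at hij
    have hσij : σ i = σ j := by
      rcases hij with h | h
      · exact h
      · rw [← h, ComplexEmbedding.isReal_iff.mp (hσreal i)]
    apply hτ.injective
    ext x
    have := RingHom.congr_fun hσij x
    simpa [σ, Complex.ofReal_inj] using this
  have hprealp : ∀ i, IsReal (p i) := fun i => isReal_mk_iff.mpr (hσreal i)
  -- counting : there are exactly `n` infinite places
  have hcard : Fintype.card (InfinitePlace F) = n := by
    have h1 : n ≤ nrRealPlaces F := by
      have : Function.Injective (fun i => (⟨p i, hprealp i⟩ : {w : InfinitePlace F // IsReal w})) :=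
        fun i j hij => hpinj (congr_arg Subtype.val hij)
      simpa using Fintype.card_le_of_injective _ this
    have h2 : nrRealPlaces F + 2 * nrComplexPlaces F = n := by
      rw [card_add_two_mul_card_eq_rank, hn]
    rw [card_eq_nrRealPlaces_add_nrComplexPlaces]
    omega
  have hpbij : Function.Bijective p :=
    (Fintype.bijective_iff_injective_and_card p).mpr ⟨hpinj, by rw [Fintype.card_fin, hcard]⟩
  set e : Fin n ≃ InfinitePlace F := Equiv.ofBijective p hpbij with he
  have heapp : ∀ i, e i = p i := fun i => rfl
  have hallreal : ∀ w : InfinitePlace F, IsReal w := by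
    intro w
    have : p (e.symm w) = w := e.apply_symm_apply w
    rw [← this]
    exact hprealp _
  have hmult : ∀ w : InfinitePlace F, mult w = 1 := fun w => by
    rw [mult, if_pos (hallreal w)]
  -- positivity of units in Γ
  have hpos : ∀ u : (𝓞 F)ˣ, u ∈ totPosUnits F τ → ∀ i, 0 < τ i (algebraMap (𝓞 F) F ↑u) :=
    fun u hu i => hu i
  have hplace : ∀ u : (𝓞 F)ˣ, u ∈ totPosUnits F τ → ∀ i,
      p i (algebraMap (𝓞 F) F ↑u) = τ i (algebraMap (𝓞 F) F ↑u) := by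
    intro u hu i
    rw [happly, abs_of_pos (hpos u hu i)]
  -- the norm of a totally positive unit is 1 :
  have hnorm : ∀ u : (𝓞 F)ˣ, u ∈ totPosUnits F τ →
      ∏ i, τ i (algebraMap (𝓞 F) F ↑u) = 1 := by
    intro u hu
    have h1 : ∏ w : InfinitePlace F, w ((u : 𝓞 F) : F) ^ mult w = 1 := by
      rw [prod_eq_abs_norm (K := F) ((u : 𝓞 F) : F)]
      rw [Units.norm, Rat.cast_one]
    rw [← Equiv.prod_comp e (fun w => w ((u : 𝓞 F) : F) ^ mult w)] at h1
    simp_rw [hmult, pow_one] at h1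
    calc ∏ i, τ i (algebraMap (𝓞 F) F ↑u) = ∏ i, p i (algebraMap (𝓞 F) F ↑u) :=
          Finset.prod_congr rfl fun i _ => (hplace u hu i).symm
      _ = 1 := by
          rw [show (algebraMap (𝓞 F) F ↑u) = ((u : 𝓞 F) : F) from rfl]
          simp_rw [← heapp]
          exact h1
  constructor
  · -- forward direction
    intro H i j
    -- the log relation on Γ
    have hlog : ∀ u ∈ Γ, ∑ i, (k i : ℝ) * Real.log (τ i (algebraMap (𝓞 F) F ↑u)) = 0 := by
      intro u hu
      have h1 := congr_arg Real.log (H u hu)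
      rw [Real.log_one, Real.log_prod] at h1
      · simp_rw [Real.log_pow] at h1
        exact h1
      · intro i _
        exact pow_ne_zero _ (ne_of_gt (hpos u (hΓ hu) i))
    -- the linear functional
    set c : {w : InfinitePlace F // w ≠ w₀} → ℝ :=
      fun w => (k (e.symm w.1) : ℝ) - (k (e.symm w₀) : ℝ) with hc
    set lf : ({w : InfinitePlace F // w ≠ w₀} → ℝ) →ₗ[ℝ] ℝ :=
      ∑ w, c w • LinearMap.proj w with hlf
    have hlfapp : ∀ x, lf x = ∑ w, c w * x w := by
      intro x
      rw [hlf]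
      simp [LinearMap.proj_apply]
    -- lf vanishes on logEmbedding of Γ
    have hkerΓ : ∀ u ∈ Γ, lf (logEmbedding F (Additive.ofMul u)) = 0 := by
      intro u hu
      have hup := hΓ hu
      rw [hlfapp]
      have hmul1 : ∀ w : {w : InfinitePlace F // w ≠ w₀},
          logEmbedding F (Additive.ofMul u) w = Real.log (w.1 ((u : 𝓞 F) : F)) := by
        intro w
        rw [logEmbedding_component, hmult, Nat.cast_one, one_mul]
      simp_rw [hmul1, hc, sub_mul]
      rw [Finset.sum_sub_distrib, ← Finset.mul_sum]
      have hsum : ∑ w : {w : InfinitePlace F // w ≠ w₀}, Real.log (w.1 ((u : 𝓞 F) : F)) =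
          - Real.log (w₀ ((u : 𝓞 F) : F)) := by
        have h2 := sum_logEmbedding_component (K := F) u
        simp_rw [logEmbedding_component, hmult, Nat.cast_one, one_mul, neg_mul] at h2
        simpa using h2
      rw [hsum]
      have hsub : ∑ w ∈ Finset.univ.erase w₀, (k (e.symm w) : ℝ) * Real.log (w ((u : 𝓞 F) : F)) =
          ∑ w : {w : InfinitePlace F // w ≠ w₀},
            (k (e.symm w.1) : ℝ) * Real.log (w.1 ((u : 𝓞 F) : F)) :=
        Finset.sum_subtype (Finset.univ.erase w₀)
          (fun w => by simp [Finset.mem_erase]) _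
      rw [← hsub]
      have htot := Finset.add_sum_erase Finset.univ
        (fun w : InfinitePlace F => (k (e.symm w) : ℝ) * Real.log (w ((u : 𝓞 F) : F)))
        (Finset.mem_univ w₀)
      have hτsum : ∑ w : InfinitePlace F,
          (k (e.symm w) : ℝ) * Real.log (w ((u : 𝓞 F) : F)) = 0 := by
        rw [← Equiv.sum_comp e
          (fun w => (k (e.symm w) : ℝ) * Real.log (w ((u : 𝓞 F) : F)))]
        simp_rw [Equiv.symm_apply_apply]
        have h3 : ∀ i, Real.log ((e i) ((u : 𝓞 F) : F)) =
            Real.log (τ i (algebraMap (𝓞 F) F ↑u)) := by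
          intro i
          rw [heapp, hplace u hup i]
        simp_rw [h3]
        exact hlog u hu
      linarith [htot, hτsum]
    -- lf vanishes on logEmbedding of every unit
    have hkerall : ∀ v : (𝓞 F)ˣ, lf (logEmbedding F (Additive.ofMul v)) = 0 := by
      intro v
      set m := Γ.relIndex (totPosUnits F τ) with hm
      have hv2 : v ^ 2 ∈ totPosUnits F τ := by
        intro i
        have h1 : τ i (algebraMap (𝓞 F) F ↑v) * τ i (algebraMap (𝓞 F) F ↑v⁻¹) = 1 := by
          rw [← map_mul, ← map_mul, Units.mul_inv, map_one, map_one]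
        have h2 : τ i (algebraMap (𝓞 F) F ↑v) ≠ 0 := by
          intro h; rw [h, zero_mul] at h1; exact zero_ne_one h1
        have h3 : (algebraMap (𝓞 F) F ↑(v ^ 2)) = (algebraMap (𝓞 F) F ↑v) ^ 2 := by
          rw [Units.val_pow_eq_pow_val, map_pow]
        rw [h3, map_pow]
        exact pow_two_pos_of_ne_zero h2
      have hmem : ((⟨v ^ 2, hv2⟩ : totPosUnits F τ) ^ m) ∈
          Γ.subgroupOf (totPosUnits F τ) := by
        have := Subgroup.pow_index_mem (Γ.subgroupOf (totPosUnits F τ))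
          (⟨v ^ 2, hv2⟩ : totPosUnits F τ)
        exact this
      rw [Subgroup.mem_subgroupOf] at hmem
      have hmem' : v ^ (2 * m) ∈ Γ := by
        have : (((⟨v ^ 2, hv2⟩ : totPosUnits F τ) ^ m : totPosUnits F τ) : (𝓞 F)ˣ)
            = v ^ (2 * m) := by
          push_cast [pow_mul]
          rfl
        rwa [this] at hmem
      have h0 := hkerΓ _ hmem'
      have hlogpow : logEmbedding F (Additive.ofMul (v ^ (2 * m))) =
          (2 * m) • logEmbedding F (Additive.ofMul v) := by
        rw [show Additive.ofMul (v ^ (2 * m)) = (2 * m) • Additive.ofMul v by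
          simp]
        rw [map_nsmul]
      rw [hlogpow, map_nsmul, nsmul_eq_mul] at h0
      have h2m : ((2 * m : ℕ) : ℝ) ≠ 0 := by
        simp [hm]
        omega
      exact (mul_eq_zero.mp h0).resolve_left h2m
    -- hence lf vanishes on the unit lattice, hence everywhere
    have hker : (unitLattice F : Set ({w : InfinitePlace F // w ≠ w₀} → ℝ)) ⊆
        (LinearMap.ker lf : Set _) := by
      rintro x hx
      obtain ⟨v, -, rfl⟩ := hx
      exact LinearMap.mem_ker.mpr (hkerall v.toMul)
    have hspan : Submodule.span ℝ (unitLattice F : Set _) ≤ LinearMap.ker lf :=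
      Submodule.span_le.mpr hker
    rw [unitLattice_span_eq_top] at hspan
    have hlfzero : ∀ x, lf x = 0 := fun x => hspan Submodule.mem_top
    -- hence all coefficients c vanish
    have hczero : ∀ w, c w = 0 := by
      intro w
      have h4 := hlfzero (Pi.single w 1)
      rw [hlfapp] at h4
      simpa [Pi.single_apply, mul_ite, Finset.sum_ite_eq'] using h4
    have hkeq : ∀ i, k i = k (e.symm w₀) := by
      intro i
      by_cases hie : e i = w₀
      · rw [← hie, Equiv.symm_apply_apply]
      · have h5 := hczero ⟨e i, hie⟩
        rw [hc] at h5
        have h6 : (k (e.symm (e i)) : ℝ) = k (e.symm w₀) := by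
          simp only at h5
          linarith [h5]
        rw [Equiv.symm_apply_apply] at h6
        exact_mod_cast h6
    rw [hkeq i, hkeq j]
  · -- backward direction
    intro h u hu
    have hup := hΓ hu
    obtain ⟨i₀⟩ : Nonempty (Fin n) := ⟨e.symm (Classical.arbitrary _)⟩
    calc ∏ i, τ i (algebraMap (𝓞 F) F ↑u) ^ k i
        = ∏ i, τ i (algebraMap (𝓞 F) F ↑u) ^ k i₀ :=
          Finset.prod_congr rfl fun i _ => by rw [h i i₀]
      _ = (∏ i, τ i (algebraMap (𝓞 F) F ↑u)) ^ k i₀ := by rw [Finset.prod_pow]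
      _ = 1 := by rw [hnorm u hup, one_pow]
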